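/- If G is a connected (P7, C5, paw)-free graph containing an induced 7-cycle, then every vertex of G adjacent to the cycle has neighborhood on the cycle equal to {v_i, v_{i+2}} for some i (indices mod 7). -/

import Mathlib

open SimpleGraph

/-- `G` contains no induced subgraph isomorphic to `H`. -/
def IsFreeOf {V W : Type*} (G : SimpleGraph V) (H : SimpleGraph W) : Prop :=
  ¬ Nonempty (H ↪g G)

/-- The paw: a triangle 0,1,2 with a pendant edge 2-3. -/
def pawGraph : SimpleGraph (Fin 4) := SimpleGraph.fromRel (fun a b =>
  (a, b) ∈ [((0 : Fin 4), (1 : Fin 4)), (0, 2), (1, 2), (2, 3)])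

set_option maxRecDepth 4096 in
set_option maxHeartbeats 3000000 in
theorem stmt_8 {V : Type*} (G : SimpleGraph V)
    (hconn : G.Connected)
    (hP7 : IsFreeOf G (pathGraph 7)) (hC5 : IsFreeOf G (cycleGraph 5))
    (hpaw : IsFreeOf G pawGraph)
    (v : Fin 7 → V) (hinj : Function.Injective v)
    (hcyc : ∀ i j : Fin 7, G.Adj (v i) (v j) ↔ (j = i + 1 ∨ i = j + 1))
    (x : V) (hxL : x ∉ Set.range v) (hadj : ∃ j : Fin 7, G.Adj x (v j)) :
    ∃ i : Fin 7, ∀ j : Fin 7, G.Adj x (v j) ↔ (j = i ∨ j = i + 2) := by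
  have xnadj : ∀ k : Fin 7, x ≠ v k := fun k h => hxL ⟨k, h.symm⟩
  have xnadj' : ∀ k : Fin 7, v k ≠ x := fun k h => xnadj k h.symm
  have xs : ∀ k : Fin 7, G.Adj (v k) x ↔ G.Adj x (v k) := fun k => G.adj_comm _ _
  have cycAdj : ∀ (j a b : Fin 7),
      G.Adj (v (j + a)) (v (j + b)) ↔ (b = a + 1 ∨ a = b + 1) := by
    intro j a b
    rw [hcyc]
    constructor
    · rintro (h | h)
      · left; rwa [add_assoc, add_right_inj] at h
      · right; rwa [add_assoc, add_right_inj] at h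
    · rintro (rfl | rfl)
      · left; rw [add_assoc]
      · right; rw [add_assoc]
  have cycAdj0 : ∀ (j b : Fin 7), G.Adj (v j) (v (j + b)) ↔ (b = 1 ∨ b = 6) := by
    intro j b
    rw [hcyc]
    constructor
    · rintro (h | h)
      · left; rwa [add_right_inj] at h
      · right
        rw [add_assoc] at h
        rw [eq_neg_of_add_eq_zero_left ((left_eq_add).mp h)]
        decide
    · rintro (rfl | rfl)
      · left; rfl
      · right; rw [add_assoc, show (6 : Fin 7) + 1 = 0 by decide, add_zero]
  have cycAdj0' : ∀ (j b : Fin 7), G.Adj (v (j + b)) (v j) ↔ (b = 1 ∨ b = 6) := by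
    intro j b
    rw [G.adj_comm]
    exact cycAdj0 j b
  -- no two consecutive neighbours
  have NC : ∀ j : Fin 7, G.Adj x (v j) → G.Adj x (v (j + 1)) → False := by
    intro j h0 h1
    by_cases h3 : G.Adj x (v (j + 3))
    · refine hpaw ⟨⟨⟨fun p : Fin 4 =>
        if p = 2 then x else if p = 0 then v (j + 0) else
        if p = 1 then v (j + 1) else v (j + 3), ?_⟩, ?_⟩⟩
      · intro p q hpq
        fin_cases p <;> fin_cases q <;>
          first
          | rfl
          | (exfalso; revert hpq;
             simp [hinj.eq_iff, xnadj, xnadj', add_right_inj, left_eq_add,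
               add_eq_left])
      · intro p q
        fin_cases p <;> fin_cases q <;>
          simp [pawGraph, cycAdj, cycAdj0, cycAdj0', xs, h0, h1, h3,
            SimpleGraph.irrefl] <;> decide
    · by_cases h2 : G.Adj x (v (j + 2))
      · refine hpaw ⟨⟨⟨fun p : Fin 4 =>
          if p = 0 then x else if p = 1 then v (j + 1) else
          if p = 2 then v (j + 2) else v (j + 3), ?_⟩, ?_⟩⟩
        · intro p q hpq
          fin_cases p <;> fin_cases q <;>
            first
            | rfl
            | (exfalso; revert hpq;
               simp [hinj.eq_iff, xnadj, xnadj', add_right_inj, left_eq_add,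
                 add_eq_left])
        · intro p q
          simp only [DFunLike.coe]
          fin_cases p <;> fin_cases q <;>
            simp [pawGraph, cycAdj, cycAdj0, cycAdj0', xs, h1, h2, h3,
              SimpleGraph.irrefl] <;> decide
      · refine hpaw ⟨⟨⟨fun p : Fin 4 =>
          if p = 1 then x else if p = 0 then v (j + 0) else
          if p = 2 then v (j + 1) else v (j + 2), ?_⟩, ?_⟩⟩
        · intro p q hpq
          fin_cases p <;> fin_cases q <;>
            first
            | rfl
            | (exfalso; revert hpq;
               simp [hinj.eq_iff, xnadj, xnadj', add_right_inj, left_eq_add,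
                 add_eq_left])
        · intro p q
          fin_cases p <;> fin_cases q <;>
            simp [pawGraph, cycAdj, cycAdj0, cycAdj0', xs, h0, h1, h2,
              SimpleGraph.irrefl] <;> decide
  -- no two neighbours at distance three
  have ND3 : ∀ j : Fin 7, G.Adj x (v j) → G.Adj x (v (j + 3)) → False := by
    intro j h0 h3
    have h1 : ¬ G.Adj x (v (j + 1)) := fun h => NC j h0 h
    have h2 : ¬ G.Adj x (v (j + 2)) := fun h =>
      NC (j + 2) h (by rw [show j + 2 + 1 = j + 3 by
        rw [add_assoc, show (2 : Fin 7) + 1 = 3 by decide]]; exact h3)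
    refine hC5 ⟨⟨⟨fun p : Fin 5 =>
      if p = 0 then x else if p = 1 then v (j + 0) else
      if p = 2 then v (j + 1) else if p = 3 then v (j + 2) else v (j + 3), ?_⟩, ?_⟩⟩
    · intro p q hpq
      fin_cases p <;> fin_cases q <;>
        first
        | rfl
        | (exfalso; revert hpq;
           simp [hinj.eq_iff, xnadj, xnadj', add_right_inj, left_eq_add,
             add_eq_left])
    · intro p q
      fin_cases p <;> fin_cases q <;>
        simp [cycleGraph_adj, cycAdj, cycAdj0, cycAdj0', xs, h0, h1, h2, h3,
          SimpleGraph.irrefl] <;> decide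
  -- a vertex cannot attach to a single cycle vertex
  have NS : ∀ j : Fin 7, G.Adj x (v j) → ¬ G.Adj x (v (j + 2)) →
      ¬ G.Adj x (v (j + 5)) → False := by
    intro j h0 h2 h5
    have h1 : ¬ G.Adj x (v (j + 1)) := fun h => NC j h0 h
    have h3 : ¬ G.Adj x (v (j + 3)) := fun h => ND3 j h0 h
    have h4 : ¬ G.Adj x (v (j + 4)) := fun h =>
      ND3 (j + 4) h (by rw [show j + 4 + 3 = j by
        rw [add_assoc, show (4 : Fin 7) + 3 = 0 by decide, add_zero]]; exact h0)
    refine hP7 ⟨⟨⟨fun p : Fin 7 => if p = 0 then x else v (j + (p - 1)), ?_⟩, ?_⟩⟩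
    · intro p q hpq
      fin_cases p <;> fin_cases q <;>
        first
        | rfl
        | (exfalso; revert hpq;
           simp [hinj.eq_iff, xnadj, xnadj', add_right_inj, left_eq_add,
             add_eq_left])
    · intro p q
      simp only [DFunLike.coe]
      fin_cases p <;> fin_cases q <;>
        simp [pathGraph_adj, cycAdj, cycAdj0, cycAdj0', xs, h0, h1, h2, h3, h4, h5,
          SimpleGraph.irrefl] <;> decide
  -- main combinatorial claim
  have claim : ∀ i : Fin 7, G.Adj x (v i) → G.Adj x (v (i + 2)) →
      ∀ j : Fin 7, G.Adj x (v j) ↔ (j = i ∨ j = i + 2) := by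
    intro i h0 h2 j
    constructor
    · intro hsj
      obtain ⟨k, rfl⟩ : ∃ k, j = i + k := ⟨j - i, by abel⟩
      fin_cases k
      · left; simp
      · exact absurd hsj (fun h => NC i h0 h)
      · right; rfl
      · exact absurd hsj (fun h => ND3 i h0 h)
      · exact absurd hsj (fun h => ND3 (i + 4) h
          (by rw [show i + 4 + 3 = i by
            rw [add_assoc, show (4 : Fin 7) + 3 = 0 by decide, add_zero]]; exact h0))
      · exact absurd hsj (fun h => ND3 (i + 2) h2
          (by rw [show i + 2 + 3 = i + 5 by
            rw [add_assoc, show (2 : Fin 7) + 3 = 5 by decide]]; exact h))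
      · exact absurd hsj (fun h => NC (i + 6) h
          (by rw [show i + 6 + 1 = i by
            rw [add_assoc, show (6 : Fin 7) + 1 = 0 by decide, add_zero]]; exact h0))
    · rintro (rfl | rfl)
      · exact h0
      · exact h2
  obtain ⟨j0, hj0⟩ := hadj
  by_cases hs2 : G.Adj x (v (j0 + 2))
  · exact ⟨j0, claim j0 hj0 hs2⟩
  · by_cases hs5 : G.Adj x (v (j0 + 5))
    · refine ⟨j0 + 5, claim (j0 + 5) hs5 ?_⟩
      rw [show j0 + 5 + 2 = j0 by
        rw [add_assoc, show (5 : Fin 7) + 2 = 0 by decide, add_zero]]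
      exact hj0
    · exact absurd (NS j0 hj0 hs2 hs5) not_false
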